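/- In a PB instance where every project has unit cost, consider an SRX execution and a group S⊆V. At each step of SRX, the total payment made by the voters of S toward the chosen project is at most 1; moreover, if the chosen project p has positive marginal utility U_i(p)>0 for some voter i∈S, then |(∪_{i∈S} A(i)) ∩ B| increases by exactly one at that step, and if U_i(p)=0 for all i∈S then the voters of S pay nothing at that step. Consequently, if S is T-cohesive with substitutes for T⊆A (so that the initial total budget of S is at least |T|) and all marginal utilities of voters in S are strictly positive on their approved projects, SRX cannot terminate with |(∪_{i∈S} A(i)) ∩ B| < |T|. -/
import Mathlib


open Finset

/-- A voter's preference: a partition of her desired projects into groups of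
substitutes, together with a marginal utility function per group
(`margU g j` is the marginal utility of the `j`-th funded project of group `g`). -/
structure VoterPref (A : Type*) [DecidableEq A] where
  parts : Finset (Finset A)
  margU : Finset A → ℕ → ℝ

namespace VoterPref

variable {A : Type*} [DecidableEq A]

/-- `A(i)` : the set of desired projects of the voter. -/
def desired (v : VoterPref A) : Finset A := v.parts.sup id

/-- Well-formedness: groups are nonempty and pairwise disjoint, and marginal
utilities are nonnegative and nonincreasing. -/
def Valid (v : VoterPref A) : Prop :=
  (∀ g ∈ v.parts, g.Nonempty) ∧
  (∀ g₁ ∈ v.parts, ∀ g₂ ∈ v.parts, g₁ ≠ g₂ → Disjoint g₁ g₂) ∧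
  (∀ g ∈ v.parts, ∀ j : ℕ, 0 ≤ v.margU g j) ∧
  (∀ g ∈ v.parts, ∀ j : ℕ, v.margU g (j + 1) ≤ v.margU g j)

/-- The utility of a bundle `B`:  `u_i(B) = Σ_{g} Σ_{j=1}^{|g∩B|} u_{i,g}(j)`. -/
def util (v : VoterPref A) (B : Finset A) : ℝ :=
  ∑ g ∈ v.parts, ∑ j ∈ Finset.Icc 1 (g ∩ B).card, v.margU g j

/-- Marginal utility of project `p` given the already selected bundle `B`. -/
def margUtil (v : VoterPref A) (B : Finset A) (p : A) : ℝ :=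
  v.util (insert p B) - v.util B

/-- `p₁` and `p₂` are substitutes for the voter. -/
def sameGroup (v : VoterPref A) (p₁ p₂ : A) : Prop :=
  ∃ g ∈ v.parts, p₁ ∈ g ∧ p₂ ∈ g

end VoterPref

/-- A participatory budgeting instance `E = (V, A, cost, L)` together with the
voters' preferences. -/
structure PB (V A : Type*) [DecidableEq A] where
  cost : A → ℝ
  budget : ℝ
  pref : V → VoterPref A

noncomputable section
open scoped Classical

variable {V A : Type*} [Fintype V] [Fintype A] [DecidableEq A]

/-- `S` is `T`-cohesive with substitutes: `S` can afford `T` with its share of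
the budget, every voter in `S` desires every project of `T`, and no two
distinct projects of `T` are substitutes for any voter of `S`. -/
def TCohesiveSub (E : PB V A) (S : Finset V) (T : Finset A) : Prop :=
  (∑ p ∈ T, E.cost p) ≤ (E.budget / (Fintype.card V : ℝ)) * S.card ∧
  (∀ i ∈ S, T ⊆ (E.pref i).desired) ∧
  (∀ i ∈ S, ∀ p₁ ∈ T, ∀ p₂ ∈ T, p₁ ≠ p₂ → ¬ (E.pref i).sameGroup p₁ p₂)

/-- `p` is `q`-affordable given remaining budgets `b` and current utilities `U`. -/
def Affordable (E : PB V A) (U : V → A → ℝ) (b : V → ℝ) (p : A) (q : ℝ) : Prop :=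
  0 ≤ q ∧ E.cost p ≤ ∑ i, min (b i) (U i p * q)

/-- The minimal `q` for which `p` is `q`-affordable (junk value if none exists). -/
def qmin (E : PB V A) (U : V → A → ℝ) (b : V → ℝ) (p : A) : ℝ :=
  sInf {q | Affordable E U b p q}

/-- The set of unselected projects that are `q`-affordable for some `q`. -/
def affordSet (E : PB V A) (U : V → A → ℝ) (b : V → ℝ) (B : Finset A) : Finset A :=
  Finset.univ.filter fun p => p ∉ B ∧ ∃ q, Affordable E U b p q

/-- The project chosen at the current step: among affordable unselected
projects, minimize the minimal `q`, breaking ties by the (lexicographic)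
linear order on `A`; `none` if no project is affordable. -/
def choice [LinearOrder A] (E : PB V A) (U : V → A → ℝ) (b : V → ℝ) (B : Finset A) :
    Option A :=
  if h : (affordSet E U b B).Nonempty then
    some (((affordSet E U b B).filter fun p =>
        qmin E U b p = (affordSet E U b B).inf' h (qmin E U b)).min'
      (by
        obtain ⟨p, hp, hq⟩ := Finset.exists_mem_eq_inf' h (qmin E U b)
        exact ⟨p, Finset.mem_filter.mpr ⟨hp, hq.symm⟩⟩))
  else none

/-- The state (selected bundle, remaining budgets) of the generalized Rule X
after `t` steps, where `Ufun B i p` is the utility voter `i` assigns to project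
`p` when the bundle `B` has already been selected. -/
def state [LinearOrder A] (E : PB V A) (Ufun : Finset A → V → A → ℝ) :
    ℕ → Finset A × (V → ℝ)
  | 0 => (∅, fun _ => E.budget / (Fintype.card V : ℝ))
  | t + 1 =>
    let st := state E Ufun t
    match choice E (Ufun st.1) st.2 st.1 with
    | none => st
    | some p =>
        (insert p st.1,
          fun i => st.2 i - min (st.2 i) (Ufun st.1 i p * qmin E (Ufun st.1) st.2 p))

/-- The output of the generalized Rule X (after `|A|` steps the state is final). -/
def mechOutput [LinearOrder A] (E : PB V A) (Ufun : Finset A → V → A → ℝ) : Finset A :=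
  (state E Ufun (Fintype.card A)).1

/-- SRX uses, at every step, the current marginal utilities. -/
def srxU (E : PB V A) : Finset A → V → A → ℝ := fun B i p => (E.pref i).margUtil B p

/-- The Substitute Rule X mechanism. -/
def SRX [LinearOrder A] (E : PB V A) : Finset A := mechOutput E (srxU E)

/-- Rule X uses, throughout, utility 1 for every desired project. -/
def rxU (E : PB V A) : Finset A → V → A → ℝ :=
  fun _ i p => if p ∈ (E.pref i).desired then 1 else 0

/-- The (original) Rule X mechanism. -/
def RX [LinearOrder A] (E : PB V A) : Finset A := mechOutput E (rxU E)

/-- Global substitutes: all voters share one common partition `P` of the whole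
project set, each voter approving a sub-collection of its groups. -/
def GlobalSubs (E : PB V A) (P : Finset (Finset A)) : Prop :=
  (∀ g ∈ P, g.Nonempty) ∧
  (∀ g₁ ∈ P, ∀ g₂ ∈ P, g₁ ≠ g₂ → Disjoint g₁ g₂) ∧
  P.sup id = Finset.univ ∧
  (∀ i : V, (E.pref i).parts ⊆ P)

end


namespace VoterPref

variable {A : Type*} [DecidableEq A]

lemma margUtil_not_desired (v : VoterPref A) {B : Finset A} {p : A}
    (hp : p ∉ v.desired) : v.margUtil B p = 0 := by
  have h : ∀ g ∈ v.parts, g ∩ insert p B = g ∩ B := by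
    intro g hg
    have hpg : p ∉ g := fun hmem => hp (Finset.mem_sup.mpr ⟨g, hg, hmem⟩)
    ext a
    simp only [mem_inter, mem_insert]
    constructor
    · rintro ⟨ha, rfl | hb⟩
      · exact absurd ha hpg
      · exact ⟨ha, hb⟩
    · rintro ⟨ha, hb⟩; exact ⟨ha, Or.inr hb⟩
  unfold margUtil util
  rw [Finset.sum_congr rfl (fun g hg => by rw [h g hg])]
  ring

lemma margUtil_mem (v : VoterPref A) (hv : v.Valid) {B : Finset A} {p : A}
    {g : Finset A} (hg : g ∈ v.parts) (hpg : p ∈ g) (hpB : p ∉ B) :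
    v.margUtil B p = v.margU g ((g ∩ B).card + 1) := by
  unfold margUtil util
  rw [← Finset.sum_sub_distrib]
  rw [Finset.sum_eq_single_of_mem g hg]
  · have hins : g ∩ insert p B = insert p (g ∩ B) := by
      ext a
      simp only [mem_inter, mem_insert]
      constructor
      · rintro ⟨ha, rfl | hb⟩
        · exact Or.inl rfl
        · exact Or.inr ⟨ha, hb⟩
      · rintro (rfl | ⟨ha, hb⟩)
        · exact ⟨hpg, Or.inl rfl⟩
        · exact ⟨ha, Or.inr hb⟩
    rw [hins, Finset.card_insert_of_notMem (fun h => hpB (mem_inter.mp h).2)]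
    rw [Finset.sum_Icc_succ_top (Nat.one_le_iff_ne_zero.mpr (Nat.succ_ne_zero _))]
    ring
  · intro g' hg' hne
    have hdisj := hv.2.1 g' hg' g hg hne
    have hpg' : p ∉ g' := fun h => (Finset.disjoint_left.mp hdisj h) hpg
    have : g' ∩ insert p B = g' ∩ B := by
      ext a
      simp only [mem_inter, mem_insert]
      constructor
      · rintro ⟨ha, rfl | hb⟩
        · exact absurd ha hpg'
        · exact ⟨ha, hb⟩
      · rintro ⟨ha, hb⟩; exact ⟨ha, Or.inr hb⟩
    rw [this]; ring

lemma margUtil_nonneg (v : VoterPref A) (hv : v.Valid) (B : Finset A) (p : A) :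
    0 ≤ v.margUtil B p := by
  by_cases hpB : p ∈ B
  · unfold margUtil
    rw [Finset.insert_eq_self.mpr hpB]; simp
  by_cases hp : p ∈ v.desired
  · obtain ⟨g, hg, hpg⟩ := Finset.mem_sup.mp hp
    rw [margUtil_mem v hv hg hpg hpB]
    exact hv.2.2.1 g hg _
  · rw [margUtil_not_desired v hp]

lemma margUtil_pos (v : VoterPref A) (hv : v.Valid)
    (hpos : ∀ g ∈ v.parts, ∀ k : ℕ, 0 < v.margU g k)
    {B : Finset A} {p : A} (hp : p ∈ v.desired) (hpB : p ∉ B) :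
    0 < v.margUtil B p := by
  obtain ⟨g, hg, hpg⟩ := Finset.mem_sup.mp hp
  rw [margUtil_mem v hv hg hpg hpB]
  exact hpos g hg _

end VoterPref

section AuxMech

variable {V A : Type*} [Fintype V] [Fintype A] [DecidableEq A]

lemma affordSet_bddBelow (E : PB V A) (U : V → A → ℝ) (b : V → ℝ) (p : A) :
    BddBelow {q | Affordable E U b p q} :=
  ⟨0, fun _ hq => hq.1⟩

lemma payFun_continuous (E : PB V A) (U : V → A → ℝ) (b : V → ℝ) (p : A) :
    Continuous fun q : ℝ => ∑ i, min (b i) (U i p * q) :=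
  continuous_finset_sum _ fun i _ =>
    continuous_const.min (continuous_const.mul continuous_id)

lemma affordable_qmin (E : PB V A) (U : V → A → ℝ) (b : V → ℝ) (p : A)
    (hex : ∃ q, Affordable E U b p q) :
    Affordable E U b p (qmin E U b p) := by
  have hclosed : IsClosed {q | Affordable E U b p q} := by
    have heq : {q | Affordable E U b p q} =
        Set.Ici 0 ∩ (fun q => ∑ i, min (b i) (U i p * q)) ⁻¹' Set.Ici (E.cost p) := by
      ext q; simp [Affordable, Set.mem_Ici, Set.mem_preimage, and_comm]
    rw [heq]
    exact isClosed_Ici.inter (isClosed_Ici.preimage (payFun_continuous E U b p))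
  exact hclosed.csInf_mem hex (affordSet_bddBelow E U b p)

lemma qmin_pos (E : PB V A) (U : V → A → ℝ) (b : V → ℝ) (p : A)
    (hb : ∀ i, 0 ≤ b i) (hcost : 0 < E.cost p)
    (hex : ∃ q, Affordable E U b p q) : 0 < qmin E U b p := by
  have haff := affordable_qmin E U b p hex
  rcases lt_or_eq_of_le haff.1 with h | h
  · exact h
  · exfalso
    have h2 := haff.2
    rw [← h] at h2
    simp only [mul_zero] at h2
    have : (∑ i, min (b i) (0:ℝ)) = 0 := by
      apply Finset.sum_eq_zero
      intro i _
      exact min_eq_right (hb i)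
    rw [this] at h2
    linarith

lemma qmin_pay_le (E : PB V A) (U : V → A → ℝ) (b : V → ℝ) (p : A)
    (hb : ∀ i, 0 ≤ b i) (hcost : 0 < E.cost p)
    (hex : ∃ q, Affordable E U b p q) :
    (∑ i, min (b i) (U i p * qmin E U b p)) ≤ E.cost p := by
  by_contra hcon
  push_neg at hcon
  set qm := qmin E U b p with hqm
  have hqm0 : 0 < qm := qmin_pos E U b p hb hcost hex
  have hev : ∀ᶠ q in nhds qm, E.cost p < ∑ i, min (b i) (U i p * q) :=
    (payFun_continuous E U b p).continuousAt (lt_mem_nhds hcon)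
  obtain ⟨ε, hε, hδ⟩ := Metric.eventually_nhds_iff.mp hev
  set q0 := max 0 (qm - ε / 2) with hq0def
  have hq0lt : q0 < qm := max_lt hqm0 (by linarith)
  have hq0ge : qm - ε / 2 ≤ q0 := le_max_right _ _
  have hdist : dist q0 qm < ε := by
    rw [Real.dist_eq, abs_lt]
    constructor <;> linarith
  have haff0 : Affordable E U b p q0 := ⟨le_max_left _ _, le_of_lt (hδ hdist)⟩
  have : qm ≤ q0 := csInf_le (affordSet_bddBelow E U b p) haff0
  linarith

lemma choice_eq_some_of_nonempty [LinearOrder A] (E : PB V A) (U : V → A → ℝ)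
    (b : V → ℝ) (B : Finset A) (hne : (affordSet E U b B).Nonempty) :
    ∃ p, choice E U b B = some p := by
  rw [choice, dif_pos hne]
  exact ⟨_, rfl⟩

lemma choice_mem [LinearOrder A] (E : PB V A) (U : V → A → ℝ)
    (b : V → ℝ) (B : Finset A) {p : A} (h : choice E U b B = some p) :
    p ∉ B ∧ ∃ q, Affordable E U b p q := by
  classical
  by_cases hne : (affordSet E U b B).Nonempty
  · rw [choice, dif_pos hne] at h
    have hp := Option.some.inj h
    have hmem : p ∈ (affordSet E U b B).filter fun p' =>
        qmin E U b p' = (affordSet E U b B).inf' hne (qmin E U b) := by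
      rw [← hp]
      exact Finset.min'_mem _ _
    have := Finset.mem_filter.mp ((Finset.mem_filter.mp hmem).1)
    exact this.2
  · rw [choice, dif_neg hne] at h
    exact absurd h (by simp)

variable [LinearOrder A]

lemma state_succ_none (E : PB V A) (Uf : Finset A → V → A → ℝ) (t : ℕ)
    (h : choice E (Uf (state E Uf t).1) (state E Uf t).2 (state E Uf t).1 = none) :
    state E Uf (t + 1) = state E Uf t := by
  simp only [state, h]

lemma state_succ_some (E : PB V A) (Uf : Finset A → V → A → ℝ) (t : ℕ) {p : A}
    (h : choice E (Uf (state E Uf t).1) (state E Uf t).2 (state E Uf t).1 = some p) :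
    state E Uf (t + 1) =
      (insert p (state E Uf t).1,
        fun i => (state E Uf t).2 i -
          min ((state E Uf t).2 i)
            (Uf (state E Uf t).1 i p *
              qmin E (Uf (state E Uf t).1) (state E Uf t).2 p)) := by
  simp only [state, h]

lemma state_budget_nonneg (E : PB V A) (Uf : Finset A → V → A → ℝ)
    (hb0 : 0 ≤ E.budget) : ∀ t i, 0 ≤ (state E Uf t).2 i := by
  intro t
  induction t with
  | zero =>
    intro i
    simp only [state]
    exact div_nonneg hb0 (Nat.cast_nonneg _)
  | succ t ih =>
    intro i
    cases h : choice E (Uf (state E Uf t).1) (state E Uf t).2 (state E Uf t).1 with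
    | none => rw [state_succ_none E Uf t h]; exact ih i
    | some p =>
      rw [state_succ_some E Uf t h]
      simp only
      have := min_le_left ((state E Uf t).2 i)
        (Uf (state E Uf t).1 i p * qmin E (Uf (state E Uf t).1) (state E Uf t).2 p)
      linarith
  
lemma state_mono (E : PB V A) (Uf : Finset A → V → A → ℝ) (t : ℕ) :
    (state E Uf t).1 ⊆ (state E Uf (t + 1)).1 := by
  cases h : choice E (Uf (state E Uf t).1) (state E Uf t).2 (state E Uf t).1 with
  | none => rw [state_succ_none E Uf t h]
  | some p => rw [state_succ_some E Uf t h]; exact Finset.subset_insert _ _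

/-- Packaged analysis of a single SRX step under unit costs. -/
lemma srx_step (E : PB V A)
    (hbudget : 0 < E.budget) (hunit : ∀ p : A, E.cost p = 1)
    (hvalid : ∀ i : V, (E.pref i).Valid)
    (t : ℕ) (p : A)
    (h : choice E (srxU E (state E (srxU E) t).1) (state E (srxU E) t).2
          (state E (srxU E) t).1 = some p) :
    p ∉ (state E (srxU E) t).1 ∧
    (state E (srxU E) (t + 1)).1 = insert p (state E (srxU E) t).1 ∧
    (∀ i, (state E (srxU E) t).2 i - (state E (srxU E) (t + 1)).2 i =
      min ((state E (srxU E) t).2 i)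
        (srxU E (state E (srxU E) t).1 i p *
          qmin E (srxU E (state E (srxU E) t).1) (state E (srxU E) t).2 p)) ∧
    (∀ i, 0 ≤ (state E (srxU E) t).2 i - (state E (srxU E) (t + 1)).2 i) ∧
    (∑ i, ((state E (srxU E) t).2 i - (state E (srxU E) (t + 1)).2 i)) ≤ 1 := by
  obtain ⟨hpB, hex⟩ := choice_mem E _ _ _ h
  have hst := state_succ_some E (srxU E) t h
  have hbnn : ∀ i, 0 ≤ (state E (srxU E) t).2 i :=
    state_budget_nonneg E (srxU E) (le_of_lt hbudget) t
  have hcost : 0 < E.cost p := by rw [hunit]; norm_num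
  have hq0 : 0 ≤ qmin E (srxU E (state E (srxU E) t).1) (state E (srxU E) t).2 p :=
    le_of_lt (qmin_pos E _ _ p hbnn hcost hex)
  have hpay : ∀ i, (state E (srxU E) t).2 i - (state E (srxU E) (t + 1)).2 i =
      min ((state E (srxU E) t).2 i)
        (srxU E (state E (srxU E) t).1 i p *
          qmin E (srxU E (state E (srxU E) t).1) (state E (srxU E) t).2 p) := by
    intro i
    rw [hst]
    ring
  have hUnn : ∀ i, 0 ≤ srxU E (state E (srxU E) t).1 i p := fun i =>
    VoterPref.margUtil_nonneg _ (hvalid i) _ _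
  refine ⟨hpB, by rw [hst], hpay, ?_, ?_⟩
  · intro i
    rw [hpay i]
    exact le_min (hbnn i) (mul_nonneg (hUnn i) hq0)
  · calc (∑ i, ((state E (srxU E) t).2 i - (state E (srxU E) (t + 1)).2 i))
        = ∑ i, min ((state E (srxU E) t).2 i)
            (srxU E (state E (srxU E) t).1 i p *
              qmin E (srxU E (state E (srxU E) t).1) (state E (srxU E) t).2 p) :=
          Finset.sum_congr rfl fun i _ => hpay i
      _ ≤ E.cost p := qmin_pay_le E _ _ p hbnn hcost hex
      _ = 1 := hunit p

end AuxMech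

/-- Under unit costs, at each step of an SRX execution (states
`(B_t, b(t)) = state E (srxU E) t`): the total payment of the voters of `S`
toward the chosen project `p` is at most `1`; if `p` has positive marginal
utility for some voter of `S` then `|(∪_{i∈S} A(i)) ∩ B|` increases by exactly
one; and if `p` has zero marginal utility for all voters of `S` then the
voters of `S` pay nothing.  Consequently, if `S` is `T`-cohesive with
substitutes and all marginal utilities of voters in `S` on their approved
groups are strictly positive, SRX cannot terminate with
`|(∪_{i∈S} A(i)) ∩ B| < |T|`. -/
theorem srx_unit_cost_step_payments
    {V A : Type*} [Fintype V] [Fintype A] [DecidableEq A] [LinearOrder A]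
    (E : PB V A) (I : ℝ)
    (hV : 0 < Fintype.card V)
    (hbudget : 0 < E.budget)
    (hunit : ∀ p : A, E.cost p = 1)
    (hvalid : ∀ i : V, (E.pref i).Valid)
    (hI : 0 < I)
    (hfirst : ∀ i : V, ∀ g ∈ (E.pref i).parts, (E.pref i).margU g 1 = I)
    (S : Finset V) :
    (∀ (t : ℕ) (p : A),
      choice E (srxU E (state E (srxU E) t).1) (state E (srxU E) t).2
          (state E (srxU E) t).1 = some p →
        (∑ i ∈ S, ((state E (srxU E) t).2 i - (state E (srxU E) (t + 1)).2 i)) ≤ 1 ∧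
        ((∃ i ∈ S, 0 < srxU E (state E (srxU E) t).1 i p) →
          ((S.biUnion fun i => (E.pref i).desired) ∩ (state E (srxU E) (t + 1)).1).card =
            ((S.biUnion fun i => (E.pref i).desired) ∩ (state E (srxU E) t).1).card + 1) ∧
        ((∀ i ∈ S, srxU E (state E (srxU E) t).1 i p = 0) →
          ∀ i ∈ S, (state E (srxU E) (t + 1)).2 i = (state E (srxU E) t).2 i)) ∧
    (∀ T : Finset A, TCohesiveSub E S T →
      (∀ i ∈ S, ∀ g ∈ (E.pref i).parts, ∀ k : ℕ, 0 < (E.pref i).margU g k) →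
      T.card ≤ ((S.biUnion fun i => (E.pref i).desired) ∩ SRX E).card) := by
  classical
  have hbnn : ∀ t i, 0 ≤ (state E (srxU E) t).2 i :=
    state_budget_nonneg E (srxU E) (le_of_lt hbudget)
  constructor
  · intro t p hch
    obtain ⟨hpB, hB', hpay, hpaynn, hpaysum⟩ := srx_step E hbudget hunit hvalid t p hch
    refine ⟨?_, ?_, ?_⟩
    · calc (∑ i ∈ S, ((state E (srxU E) t).2 i - (state E (srxU E) (t + 1)).2 i))
          ≤ ∑ i, ((state E (srxU E) t).2 i - (state E (srxU E) (t + 1)).2 i) :=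
            Finset.sum_le_sum_of_subset_of_nonneg (Finset.subset_univ S)
              (fun i _ _ => hpaynn i)
        _ ≤ 1 := hpaysum
    · rintro ⟨i, hiS, hUpos⟩
      have hpd : p ∈ (E.pref i).desired := by
        by_contra hpd
        have hz : srxU E (state E (srxU E) t).1 i p = 0 :=
          VoterPref.margUtil_not_desired _ hpd
        rw [hz] at hUpos
        exact lt_irrefl 0 hUpos
      have hpX : p ∈ S.biUnion fun j => (E.pref j).desired :=
        Finset.mem_biUnion.mpr ⟨i, hiS, hpd⟩
      rw [hB']
      have h1 : (S.biUnion fun j => (E.pref j).desired) ∩ insert p (state E (srxU E) t).1 =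
          insert p ((S.biUnion fun j => (E.pref j).desired) ∩ (state E (srxU E) t).1) := by
        ext a
        simp only [Finset.mem_inter, Finset.mem_insert]
        constructor
        · rintro ⟨ha, rfl | hb⟩
          · exact Or.inl rfl
          · exact Or.inr ⟨ha, hb⟩
        · rintro (rfl | ⟨ha, hb⟩)
          · exact ⟨hpX, Or.inl rfl⟩
          · exact ⟨ha, Or.inr hb⟩
      rw [h1, Finset.card_insert_of_notMem (fun hmem => hpB (Finset.mem_inter.mp hmem).2)]
    · intro hz i hiS
      have h := hpay i
      rw [hz i hiS, zero_mul, min_eq_right (hbnn t i)] at h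
      linarith
  · intro T hcoh hpos
    rcases S.eq_empty_or_nonempty with rfl | hS
    · have h1 : (T.card : ℝ) ≤ 0 := by
        have h := hcoh.1
        simpa [hunit] using h
      have h2 : T.card = 0 := by
        have : T.card ≤ 0 := by exact_mod_cast h1
        omega
      simp [h2]
    · obtain ⟨i₀, hi₀⟩ := hS
      have hTX : T ⊆ S.biUnion fun j => (E.pref j).desired := fun p hp =>
        Finset.mem_biUnion.mpr ⟨i₀, hi₀, hcoh.2.1 i₀ hi₀ hp⟩
      have hTcard : (T.card : ℝ) ≤ E.budget / (Fintype.card V : ℝ) * S.card := by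
        have h := hcoh.1
        simpa [hunit] using h
      -- Accounting invariant: the group's remaining budget plus the number of
      -- desired selected projects is at least the group's initial budget.
      have inv : ∀ t, (S.card : ℝ) * (E.budget / (Fintype.card V : ℝ)) ≤
          (∑ i ∈ S, (state E (srxU E) t).2 i) +
            (((S.biUnion fun j => (E.pref j).desired) ∩ (state E (srxU E) t).1).card : ℝ) := by
        intro t
        induction t with
        | zero =>
          simp [state, Finset.sum_const, nsmul_eq_mul]
        | succ t ih =>
          cases hch : choice E (srxU E (state E (srxU E) t).1) (state E (srxU E) t).2
              (state E (srxU E) t).1 with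
          | none => rw [state_succ_none E (srxU E) t hch]; exact ih
          | some p =>
            obtain ⟨hpB, hB', hpay, hpaynn, hpaysum⟩ :=
              srx_step E hbudget hunit hvalid t p hch
            have hsplit : ∑ i ∈ S, (state E (srxU E) (t + 1)).2 i =
                (∑ i ∈ S, (state E (srxU E) t).2 i) -
                ∑ i ∈ S, ((state E (srxU E) t).2 i - (state E (srxU E) (t + 1)).2 i) := by
              rw [Finset.sum_sub_distrib]; ring
            by_cases hpX : p ∈ S.biUnion fun j => (E.pref j).desired
            · have hcount :
                  ((S.biUnion fun j => (E.pref j).desired) ∩ (state E (srxU E) (t + 1)).1).card =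
                  ((S.biUnion fun j => (E.pref j).desired) ∩ (state E (srxU E) t).1).card + 1 := by
                rw [hB']
                have h1 : (S.biUnion fun j => (E.pref j).desired) ∩ insert p (state E (srxU E) t).1 =
                    insert p ((S.biUnion fun j => (E.pref j).desired) ∩ (state E (srxU E) t).1) := by
                  ext a
                  simp only [Finset.mem_inter, Finset.mem_insert]
                  constructor
                  · rintro ⟨ha, rfl | hb⟩
                    · exact Or.inl rfl
                    · exact Or.inr ⟨ha, hb⟩
                  · rintro (rfl | ⟨ha, hb⟩)
                    · exact ⟨hpX, Or.inl rfl⟩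
                    · exact ⟨ha, Or.inr hb⟩
                rw [h1, Finset.card_insert_of_notMem (fun hmem => hpB (Finset.mem_inter.mp hmem).2)]
              have hple : ∑ i ∈ S, ((state E (srxU E) t).2 i - (state E (srxU E) (t + 1)).2 i) ≤ 1 :=
                le_trans (Finset.sum_le_sum_of_subset_of_nonneg (Finset.subset_univ S)
                  (fun i _ _ => hpaynn i)) hpaysum
              rw [hsplit, hcount]
              push_cast
              linarith
            · have hzero : ∀ i ∈ S,
                  (state E (srxU E) t).2 i - (state E (srxU E) (t + 1)).2 i = 0 := by
                intro i hiS
                have hpd : p ∉ (E.pref i).desired := fun hd =>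
                  hpX (Finset.mem_biUnion.mpr ⟨i, hiS, hd⟩)
                have hz0 : srxU E (state E (srxU E) t).1 i p = 0 :=
                  VoterPref.margUtil_not_desired _ hpd
                rw [hpay i, hz0, zero_mul, min_eq_right (hbnn t i)]
              have hcount :
                  (S.biUnion fun j => (E.pref j).desired) ∩ (state E (srxU E) (t + 1)).1 =
                  (S.biUnion fun j => (E.pref j).desired) ∩ (state E (srxU E) t).1 := by
                rw [hB']
                ext a
                simp only [Finset.mem_inter, Finset.mem_insert]
                constructor
                · rintro ⟨ha, rfl | hb⟩
                  · exact absurd ha hpX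
                  · exact ⟨ha, hb⟩
                · rintro ⟨ha, hb⟩
                  exact ⟨ha, Or.inr hb⟩
              rw [hsplit, Finset.sum_eq_zero hzero, hcount]
              linarith
      -- Progress: while fewer than |T| desired projects are selected, some
      -- project is still affordable, so SRX selects something.
      have prog : ∀ t,
          ((S.biUnion fun j => (E.pref j).desired) ∩ (state E (srxU E) t).1).card < T.card →
          ∃ p, choice E (srxU E (state E (srxU E) t).1) (state E (srxU E) t).2
            (state E (srxU E) t).1 = some p := by
        intro t hlt
        have hnsub : ¬ T ⊆ (state E (srxU E) t).1 := by
          intro hsub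
          exact absurd (Finset.card_le_card (Finset.subset_inter hTX hsub)) (not_le.mpr hlt)
        obtain ⟨p₀, hp₀T, hp₀B⟩ := Finset.not_subset.mp hnsub
        have hbS : (1 : ℝ) ≤ ∑ i ∈ S, (state E (srxU E) t).2 i := by
          have h1 := inv t
          have h2 : (((S.biUnion fun j => (E.pref j).desired) ∩
              (state E (srxU E) t).1).card : ℝ) + 1 ≤ T.card := by
            exact_mod_cast Nat.succ_le_of_lt hlt
          have hmc : (E.budget / (Fintype.card V : ℝ)) * S.card =
              (S.card : ℝ) * (E.budget / (Fintype.card V : ℝ)) := mul_comm _ _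
          linarith
        have hU : ∀ i ∈ S, 0 < srxU E (state E (srxU E) t).1 i p₀ := fun i hi =>
          VoterPref.margUtil_pos _ (hvalid i) (hpos i hi) (hcoh.2.1 i hi hp₀T) hp₀B
        have hSne : S.Nonempty := ⟨i₀, hi₀⟩
        set q := S.sup' hSne
          (fun i => (state E (srxU E) t).2 i / srxU E (state E (srxU E) t).1 i p₀) with hqdef
        have hq0 : 0 ≤ q := by
          rw [hqdef]
          exact le_trans (div_nonneg (hbnn t i₀) (le_of_lt (hU i₀ hi₀)))
            (Finset.le_sup'
              (fun i => (state E (srxU E) t).2 i / srxU E (state E (srxU E) t).1 i p₀) hi₀)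
        have hmin : ∀ i ∈ S,
            min ((state E (srxU E) t).2 i) (srxU E (state E (srxU E) t).1 i p₀ * q) =
              (state E (srxU E) t).2 i := by
          intro i hi
          apply min_eq_left
          have h1 : (state E (srxU E) t).2 i / srxU E (state E (srxU E) t).1 i p₀ ≤ q := by
            rw [hqdef]
            exact Finset.le_sup'
              (fun i => (state E (srxU E) t).2 i / srxU E (state E (srxU E) t).1 i p₀) hi
          rw [div_le_iff₀ (hU i hi)] at h1
          exact h1.trans_eq (mul_comm _ _)
        have haff : Affordable E (srxU E (state E (srxU E) t).1) (state E (srxU E) t).2 p₀ q := by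
          refine ⟨hq0, ?_⟩
          rw [hunit]
          calc (1 : ℝ) ≤ ∑ i ∈ S, (state E (srxU E) t).2 i := hbS
            _ = ∑ i ∈ S, min ((state E (srxU E) t).2 i)
                  (srxU E (state E (srxU E) t).1 i p₀ * q) :=
              (Finset.sum_congr rfl fun i hi => (hmin i hi).symm)
            _ ≤ ∑ i, min ((state E (srxU E) t).2 i)
                  (srxU E (state E (srxU E) t).1 i p₀ * q) :=
              Finset.sum_le_sum_of_subset_of_nonneg (Finset.subset_univ S)
                (fun i _ _ => le_min (hbnn t i)
                  (mul_nonneg (VoterPref.margUtil_nonneg _ (hvalid i) _ _) hq0))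
        exact choice_eq_some_of_nonempty E _ _ _
          ⟨p₀, Finset.mem_filter.mpr ⟨Finset.mem_univ _, hp₀B, q, haff⟩⟩
      -- Main induction: at every step, either enough desired projects are
      -- already selected, or the bundle keeps growing.
      have main : ∀ t,
          T.card ≤ ((S.biUnion fun j => (E.pref j).desired) ∩ (state E (srxU E) t).1).card ∨
          (state E (srxU E) t).1.card = t := by
        intro t
        induction t with
        | zero => right; simp [state]
        | succ t ih =>
          have hmono :
              ((S.biUnion fun j => (E.pref j).desired) ∩ (state E (srxU E) t).1).card ≤
              ((S.biUnion fun j => (E.pref j).desired) ∩ (state E (srxU E) (t + 1)).1).card :=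
            Finset.card_le_card
              (Finset.inter_subset_inter (Finset.Subset.refl _) (state_mono E (srxU E) t))
          rcases ih with hle | hcard
          · left; exact le_trans hle hmono
          · by_cases hge : T.card ≤
                ((S.biUnion fun j => (E.pref j).desired) ∩ (state E (srxU E) t).1).card
            · left; exact le_trans hge hmono
            · obtain ⟨p, hp⟩ := prog t (not_le.mp hge)
              obtain ⟨hpB, hB', -, -, -⟩ := srx_step E hbudget hunit hvalid t p hp
              right
              rw [hB', Finset.card_insert_of_notMem hpB, hcard]
      rcases main (Fintype.card A) with hle | hcard
      · exact hle
      · have huniv : (state E (srxU E) (Fintype.card A)).1 = Finset.univ :=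
          Finset.eq_univ_of_card _ hcard
        show T.card ≤ ((S.biUnion fun j => (E.pref j).desired) ∩
          (state E (srxU E) (Fintype.card A)).1).card
        rw [huniv, Finset.inter_univ]
        exact Finset.card_le_card hTX
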